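/- arXiv:2601.14893 — 3 statements merged into one kernel-verified Lean document; each statement's English description precedes it below -/
import Mathlib

section
/- If A, α, β > 0, θ ∈ (0,1), 0 < θ + ωψ < 1, ψ < 1, 0 < ωψ < 1, and ω, ψ have the same sign, then f(k) = A k^θ (α k^ψ + β)^ω satisfies f''(k) < 0 for all k > 0 (strict concavity). -/
open Real Filter Set Topology

lemma key_deriv (α β ψ : ℝ) (hα : 0 < α) (hβ : 0 < β) (c p q k : ℝ) (hk : 0 < k) :
    HasDerivAt (fun k : ℝ => c * k ^ p * (α * k ^ ψ + β) ^ q)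
      (c * p * k ^ (p - 1) * (α * k ^ ψ + β) ^ q
        + c * q * α * ψ * k ^ (p + ψ - 1) * (α * k ^ ψ + β) ^ (q - 1)) k := by
  have hu : 0 < α * k ^ ψ + β := by positivity
  have h1 : HasDerivAt (fun k : ℝ => k ^ p) (p * k ^ (p - 1)) k :=
    Real.hasDerivAt_rpow_const (Or.inl hk.ne')
  have h2 : HasDerivAt (fun k : ℝ => α * k ^ ψ + β) (α * (ψ * k ^ (ψ - 1))) k :=
    ((Real.hasDerivAt_rpow_const (Or.inl hk.ne')).const_mul α).add_const β
  have h3 : HasDerivAt (fun k : ℝ => (α * k ^ ψ + β) ^ q)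
      ((α * (ψ * k ^ (ψ - 1))) * q * (α * k ^ ψ + β) ^ (q - 1)) k :=
    h2.rpow_const (Or.inl hu.ne')
  have h4 := (h1.const_mul c).mul h3
  refine h4.congr_deriv ?_
  rw [show p + ψ - 1 = p + (ψ - 1) by ring, Real.rpow_add hk]
  ring

theorem stmt_3 (A α β θ ψ ω : ℝ) (hA : 0 < A) (hα : 0 < α) (hβ : 0 < β)
    (hθ : 0 < θ) (hθ1 : θ < 1) (hs0 : 0 < θ + ω * ψ) (hs1 : θ + ω * ψ < 1)
    (hψ1 : ψ < 1) (hωψ0 : 0 < ω * ψ) (hωψ1 : ω * ψ < 1)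
    (hsign : (0 < ω ∧ 0 < ψ) ∨ (ω < 0 ∧ ψ < 0)) :
    ∀ k : ℝ, 0 < k →
      deriv (deriv (fun k : ℝ => A * k ^ θ * (α * k ^ ψ + β) ^ ω)) k < 0 := by
  intro k hk
  have hu : 0 < α * k ^ ψ + β := by positivity
  have hEq : deriv (fun k : ℝ => A * k ^ θ * (α * k ^ ψ + β) ^ ω) =ᶠ[nhds k]
      (fun x : ℝ => A * θ * x ^ (θ - 1) * (α * x ^ ψ + β) ^ ω
        + A * ω * α * ψ * x ^ (θ + ψ - 1) * (α * x ^ ψ + β) ^ (ω - 1)) := by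
    filter_upwards [isOpen_Ioi.mem_nhds hk] with x hx
    exact (key_deriv α β ψ hα hβ A θ ω x hx).deriv
  rw [hEq.deriv_eq]
  have hD :=
    (key_deriv α β ψ hα hβ (A * θ) (θ - 1) ω k hk).add
      (key_deriv α β ψ hα hβ (A * ω * α * ψ) (θ + ψ - 1) (ω - 1) k hk)
  simp only [Pi.add_def] at hD
  rw [hD.deriv]
  -- rewriting the rpow exponents
  have r1 : k ^ (θ - 1 - 1) = k ^ (θ - 2) := by rw [show θ - 1 - 1 = θ - 2 by ring]
  have r2 : k ^ (θ - 1 + ψ - 1) = k ^ (θ - 2) * k ^ ψ := by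
    rw [show θ - 1 + ψ - 1 = (θ - 2) + ψ by ring, Real.rpow_add hk]
  have r3 : k ^ (θ + ψ - 1 - 1) = k ^ (θ - 2) * k ^ ψ := by
    rw [show θ + ψ - 1 - 1 = (θ - 2) + ψ by ring, Real.rpow_add hk]
  have r4 : k ^ (θ + ψ - 1 + ψ - 1) = k ^ (θ - 2) * k ^ ψ * k ^ ψ := by
    rw [show θ + ψ - 1 + ψ - 1 = (θ - 2) + ψ + ψ by ring, Real.rpow_add hk,
      Real.rpow_add hk]
  have rU1 : (α * k ^ ψ + β) ^ ω = (α * k ^ ψ + β) ^ (ω - 2) * (α * k ^ ψ + β)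
      * (α * k ^ ψ + β) := by
    conv_lhs => rw [show ω = (ω - 2) + 1 + 1 by ring]
    rw [Real.rpow_add hu, Real.rpow_add hu, Real.rpow_one]
  have rU2 : (α * k ^ ψ + β) ^ (ω - 1) = (α * k ^ ψ + β) ^ (ω - 2) * (α * k ^ ψ + β) := by
    rw [show ω - 1 = (ω - 2) + 1 by ring, Real.rpow_add hu, Real.rpow_one]
  have rU3 : (α * k ^ ψ + β) ^ (ω - 1 - 1) = (α * k ^ ψ + β) ^ (ω - 2) := by rw [show ω - 1 - 1 = ω - 2 by ring]
  rw [r1, r2, r3, r4, rU1, rU2, rU3]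
  set b := k ^ ψ with hb
  set a := k ^ (θ - 2) with ha
  set c := (α * b + β) ^ (ω - 2) with hc
  have hbpos : 0 < b := Real.rpow_pos_of_pos hk ψ
  have hapos : 0 < a := Real.rpow_pos_of_pos hk (θ - 2)
  have hcpos : 0 < c := Real.rpow_pos_of_pos hu (ω - 2)
  have hxpos : 0 < α * b := by positivity
  have hm1 : (θ + ω * ψ) * (θ + ω * ψ - 1) < 0 :=
    mul_neg_of_pos_of_neg hs0 (by linarith)
  have hm2 : θ * (θ - 1) < 0 := mul_neg_of_pos_of_neg hθ (by linarith)
  have hm3 : 2 * θ * (θ - 1 + ω * ψ) + ω * ψ * (ψ - 1) < 0 := by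
    nlinarith [mul_pos hθ (show (0:ℝ) < 1 - θ - ω * ψ by linarith),
      mul_pos hωψ0 (show (0:ℝ) < 1 - ψ by linarith)]
  have hE : θ * (θ - 1) * (((α * b) + β) * ((α * b) + β)) + θ * (ω * ψ) * ((α * b) * ((α * b) + β))
      + (ω * ψ) * (θ + ψ - 1) * ((α * b) * ((α * b) + β))
      + (ω * ψ) * ((ω - 1) * ψ) * ((α * b) * (α * b)) < 0 := by
    nlinarith [mul_neg_of_neg_of_pos hm1 (mul_pos hxpos hxpos),
      mul_neg_of_neg_of_pos hm2 (mul_pos hβ hβ),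
      mul_neg_of_neg_of_pos hm3 (mul_pos hxpos hβ)]
  have hpos : 0 < A * (a * c) := by positivity
  have hfin := mul_neg_of_pos_of_neg hpos hE
  linarith [hfin]
end

section
/- If A, α, β > 0, θ ∈ (0,1), 0 < θ + ωψ < 1, ψ < 1, 0 < ωψ < 1, ω and ψ of the same sign, then f'(k) tends to +∞ as k → 0⁺, where f(k) = A k^θ (α k^ψ + β)^ω. -/
open Real Filter Set Topology

lemma aux_rpow_tendsto (C e : ℝ) (hC : 0 < C) (he : e < 0) :
    Tendsto (fun k : ℝ => C * k ^ e) (𝓝[>] (0:ℝ)) atTop := by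
  have h1 : Tendsto (fun k : ℝ => (k⁻¹) ^ (-e)) (𝓝[>] (0:ℝ)) atTop :=
    (tendsto_rpow_atTop (by linarith : (0:ℝ) < -e)).comp tendsto_inv_nhdsGT_zero
  have h2 : Tendsto (fun k : ℝ => k ^ e) (𝓝[>] (0:ℝ)) atTop := by
    refine h1.congr' ?_
    filter_upwards [self_mem_nhdsWithin] with x hx
    have hx0 : (0:ℝ) < x := hx
    rw [Real.inv_rpow hx0.le, Real.rpow_neg hx0.le, inv_inv]
  exact h2.const_mul_atTop hC

theorem stmt_13 (A α β θ ψ ω : ℝ) (hA : 0 < A) (hα : 0 < α) (hβ : 0 < β)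
    (hθ : 0 < θ) (hθ1 : θ < 1) (hs0 : 0 < θ + ω * ψ) (hs1 : θ + ω * ψ < 1)
    (hψ1 : ψ < 1) (hωψ0 : 0 < ω * ψ) (hωψ1 : ω * ψ < 1)
    (hsign : (0 < ω ∧ 0 < ψ) ∨ (ω < 0 ∧ ψ < 0)) :
    Tendsto (deriv (fun k : ℝ => A * k ^ θ * (α * k ^ ψ + β) ^ ω)) (𝓝[>] 0) atTop := by
  set g : ℝ → ℝ := fun x => A * (θ * x ^ (θ-1)) * (α * x ^ ψ + β) ^ ω +
      (A * x ^ θ) * (α * (ψ * x ^ (ψ-1)) * ω * (α * x ^ ψ + β) ^ (ω-1)) with hg_def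
  have hEvent : deriv (fun k : ℝ => A * k ^ θ * (α * k ^ ψ + β) ^ ω) =ᶠ[𝓝[>] (0:ℝ)] g := by
    filter_upwards [self_mem_nhdsWithin] with x hx
    have hx0 : (0:ℝ) < x := hx
    have hb : 0 < α * x ^ ψ + β := by positivity
    have h1 : HasDerivAt (fun k : ℝ => k ^ θ) (θ * x ^ (θ-1)) x :=
      Real.hasDerivAt_rpow_const (Or.inl hx0.ne')
    have h2 : HasDerivAt (fun k : ℝ => α * k ^ ψ + β) (α * (ψ * x ^ (ψ-1))) x :=
      ((Real.hasDerivAt_rpow_const (Or.inl hx0.ne')).const_mul α).add_const β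
    have h3 : HasDerivAt (fun k : ℝ => (α * k ^ ψ + β) ^ ω)
        (α * (ψ * x ^ (ψ-1)) * ω * (α * x ^ ψ + β) ^ (ω-1)) x :=
      h2.rpow_const (Or.inl hb.ne')
    have h4 := (h1.const_mul A).mul h3
    exact h4.deriv
  have hIoo : Ioo (0:ℝ) 1 ∈ 𝓝[>] (0:ℝ) :=
    Ioo_mem_nhdsGT_of_mem (by constructor <;> norm_num)
  rcases hsign with ⟨hω, hψ⟩ | ⟨hω, hψ⟩
  · -- ω, ψ > 0
    refine (tendsto_atTop_mono' _ ?_ (aux_rpow_tendsto (A * θ * β ^ ω) (θ - 1)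
      (by positivity) (by linarith))).congr' hEvent.symm
    filter_upwards [hIoo] with x hx
    obtain ⟨hx0, hx1⟩ := hx
    have hb : 0 < α * x ^ ψ + β := by positivity
    have hterm2 : 0 ≤ (A * x ^ θ) * (α * (ψ * x ^ (ψ-1)) * ω * (α * x ^ ψ + β) ^ (ω-1)) := by
      positivity
    have hbase : β ^ ω ≤ (α * x ^ ψ + β) ^ ω := by
      apply Real.rpow_le_rpow hβ.le _ hω.le
      nlinarith [Real.rpow_pos_of_pos hx0 ψ]
    have h1 : A * θ * β ^ ω * x ^ (θ-1) ≤ A * (θ * x ^ (θ-1)) * (α * x ^ ψ + β) ^ ω :=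
      calc A * θ * β ^ ω * x ^ (θ-1) = (A * θ * x ^ (θ-1)) * β ^ ω := by ring
        _ ≤ (A * θ * x ^ (θ-1)) * (α * x ^ ψ + β) ^ ω := by
            apply mul_le_mul_of_nonneg_left hbase; positivity
        _ = A * (θ * x ^ (θ-1)) * (α * x ^ ψ + β) ^ ω := by ring
    simp only [hg_def]
    linarith
  · -- ω, ψ < 0
    refine (tendsto_atTop_mono' _ ?_ (aux_rpow_tendsto (A * θ * (α + β) ^ ω) (θ + ω * ψ - 1)
      (by positivity) (by linarith))).congr' hEvent.symm
    filter_upwards [hIoo] with x hx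
    obtain ⟨hx0, hx1⟩ := hx
    have hb : 0 < α * x ^ ψ + β := by positivity
    have hxψ : 1 ≤ x ^ ψ := Real.one_le_rpow_of_pos_of_le_one_of_nonpos hx0 hx1.le hψ.le
    have hterm2 : 0 ≤ (A * x ^ θ) * (α * (ψ * x ^ (ψ-1)) * ω * (α * x ^ ψ + β) ^ (ω-1)) := by
      have heq : (A * x ^ θ) * (α * (ψ * x ^ (ψ-1)) * ω * (α * x ^ ψ + β) ^ (ω-1))
          = (ω * ψ) * (A * x ^ θ * α * x ^ (ψ-1) * (α * x ^ ψ + β) ^ (ω-1)) := by ring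
      rw [heq]
      exact mul_nonneg hωψ0.le (by positivity)
    -- base upper bound:  α x^ψ + β ≤ (α+β) x^ψ
    have hub : α * x ^ ψ + β ≤ (α + β) * x ^ ψ := by nlinarith
    have hbase : ((α + β) * x ^ ψ) ^ ω ≤ (α * x ^ ψ + β) ^ ω :=
      Real.rpow_le_rpow_of_nonpos hb hub hω.le
    have hsplit : ((α + β) * x ^ ψ) ^ ω = (α + β) ^ ω * x ^ (ψ * ω) := by
      rw [Real.mul_rpow (by positivity) (by positivity), ← Real.rpow_mul hx0.le]
    have hxx : x ^ (θ + ω * ψ - 1) = x ^ (θ - 1) * x ^ (ψ * ω) := by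
      rw [← Real.rpow_add hx0]; ring_nf
    have hbase' : (α + β) ^ ω * x ^ (ψ * ω) ≤ (α * x ^ ψ + β) ^ ω := by
      rw [← hsplit]; exact hbase
    have h1 : A * θ * (α + β) ^ ω * x ^ (θ + ω * ψ - 1)
        ≤ A * (θ * x ^ (θ - 1)) * (α * x ^ ψ + β) ^ ω := by
      rw [hxx]
      calc A * θ * (α + β) ^ ω * (x ^ (θ-1) * x ^ (ψ * ω))
          = (A * θ * x ^ (θ-1)) * ((α + β) ^ ω * x ^ (ψ * ω)) := by ring
        _ ≤ (A * θ * x ^ (θ-1)) * (α * x ^ ψ + β) ^ ω := by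
            apply mul_le_mul_of_nonneg_left hbase'; positivity
        _ = A * (θ * x ^ (θ-1)) * (α * x ^ ψ + β) ^ ω := by ring
    simp only [hg_def]
    linarith
end

section
/- Under the restrictions α, β > 0, 0 < θ < 1, 0 < θ+ωψ < 1, ψ ≠ 0, the elasticity of substitution σ(k) = N(k)/(N(k) − αβωψ² k^ψ) with N(k) = (α(θ+ωψ)k^ψ + βθ)(α(1−θ−ωψ)k^ψ + β(1−θ)) tends to 1 both as k → 0⁺ and as k → +∞. -/
open Real Filter Set Topology

lemma aux_g_zero (A B C D E : ℝ) (hB : 0 < B) (hD : 0 < D) :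
    Tendsto (fun x : ℝ => ((A * x + B) * (C * x + D)) /
      ((A * x + B) * (C * x + D) - E * x)) (𝓝 0) (𝓝 1) := by
  have hid : Tendsto (fun x : ℝ => x) (𝓝 (0 : ℝ)) (𝓝 (0 : ℝ)) := tendsto_id
  have h1 : Tendsto (fun x : ℝ => (A * x + B) * (C * x + D)) (𝓝 0) (𝓝 (B * D)) := by
    have := ((hid.const_mul A).add_const B).mul ((hid.const_mul C).add_const D)
    simpa using this
  have h2 : Tendsto (fun x : ℝ => (A * x + B) * (C * x + D) - E * x) (𝓝 0) (𝓝 (B * D)) := by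
    have := h1.sub (hid.const_mul E)
    simpa using this
  have hBD : B * D ≠ 0 := by positivity
  have := h1.div h2 hBD
  rw [div_self hBD] at this
  exact this

lemma aux_g_top (A B C D E : ℝ) (hA : 0 < A) (hC : 0 < C) :
    Tendsto (fun x : ℝ => ((A * x + B) * (C * x + D)) /
      ((A * x + B) * (C * x + D) - E * x)) atTop (𝓝 1) := by
  have key : ∀ a b c : ℝ, c ≠ 0 → a / b = (a / c) / (b / c) := by
    intro a b c hc
    rcases eq_or_ne b 0 with h | h
    · simp [h]
    · field_simp
  have heq : (fun x : ℝ => ((A * x + B) * (C * x + D)) /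
      ((A * x + B) * (C * x + D) - E * x)) =ᶠ[atTop]
      (fun x : ℝ => ((A + B * x⁻¹) * (C + D * x⁻¹)) /
      ((A + B * x⁻¹) * (C + D * x⁻¹) - E * x⁻¹)) := by
    filter_upwards [eventually_gt_atTop (0 : ℝ)] with x hx
    have hx' : x ≠ 0 := ne_of_gt hx
    have hx2 : (x : ℝ) ^ 2 ≠ 0 := pow_ne_zero 2 hx'
    rw [key _ _ (x ^ 2) hx2]
    have e1 : A + B * x⁻¹ = (A * x + B) / x := by field_simp
    have e2 : C + D * x⁻¹ = (C * x + D) / x := by field_simp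
    have e3 : E * x⁻¹ = (E * x) / x ^ 2 := by
      rw [sq]; field_simp
    congr 1
    · rw [e1, e2, div_mul_div_comm, ← sq]
    · rw [e1, e2, e3, div_mul_div_comm, ← sq, div_sub_div_same]
  rw [tendsto_congr' heq]
  have hinv : Tendsto (fun x : ℝ => x⁻¹) atTop (𝓝 0) := tendsto_inv_atTop_zero
  have h1 : Tendsto (fun x : ℝ => (A + B * x⁻¹) * (C + D * x⁻¹)) atTop (𝓝 (A * C)) := by
    have := ((hinv.const_mul B).const_add A).mul ((hinv.const_mul D).const_add C)
    simpa using this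
  have h2 : Tendsto (fun x : ℝ => (A + B * x⁻¹) * (C + D * x⁻¹) - E * x⁻¹) atTop (𝓝 (A * C)) := by
    have := h1.sub (hinv.const_mul E)
    simpa using this
  have hAC : A * C ≠ 0 := by positivity
  have := h1.div h2 hAC
  rw [div_self hAC] at this
  exact this

theorem stmt_18 (α β θ ψ ω : ℝ) (hα : 0 < α) (hβ : 0 < β)
    (hθ : 0 < θ) (hθ1 : θ < 1) (hs0 : 0 < θ + ω * ψ) (hs1 : θ + ω * ψ < 1)
    (hψ : ψ ≠ 0)
    (N : ℝ → ℝ)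
    (hN : ∀ k : ℝ, N k = (α * (θ + ω * ψ) * k ^ ψ + β * θ) *
        (α * (1 - θ - ω * ψ) * k ^ ψ + β * (1 - θ)))
    (hden : ∀ k : ℝ, 0 < k → 0 < N k - α * β * ω * ψ ^ 2 * k ^ ψ) :
    Tendsto (fun k : ℝ => N k / (N k - α * β * ω * ψ ^ 2 * k ^ ψ)) (𝓝[>] 0) (𝓝 1) ∧
    Tendsto (fun k : ℝ => N k / (N k - α * β * ω * ψ ^ 2 * k ^ ψ)) atTop (𝓝 1) := by
  set A := α * (θ + ω * ψ) with hA'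
  set B := β * θ with hB'
  set C := α * (1 - θ - ω * ψ) with hC'
  set D := β * (1 - θ) with hD'
  set E := α * β * ω * ψ ^ 2 with hE'
  have hA : 0 < A := by positivity
  have hB : 0 < B := by positivity
  have hC : 0 < C := mul_pos hα (by linarith)
  have hD : 0 < D := mul_pos hβ (by linarith)
  set g : ℝ → ℝ := fun x => ((A * x + B) * (C * x + D)) /
      ((A * x + B) * (C * x + D) - E * x) with hg
  have hfun : (fun k : ℝ => N k / (N k - E * k ^ ψ)) = fun k => g (k ^ ψ) := by
    funext k
    rw [hg]
    simp only [hN k]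
  rw [hfun]
  have g0 := aux_g_zero A B C D E hB hD
  have gtop := aux_g_top A B C D E hA hC
  rcases lt_or_gt_of_ne hψ with hneg | hpos
  · -- ψ < 0 : k^ψ → atTop as k → 0+, k^ψ → 0 as k → atTop
    have hψ' : 0 < -ψ := by linarith
    have t1 : Tendsto (fun k : ℝ => k ^ ψ) (𝓝[>] 0) atTop := by
      have := (tendsto_rpow_atTop hψ').comp tendsto_inv_nhdsGT_zero
      apply this.congr'
      filter_upwards [self_mem_nhdsWithin] with k (hk : 0 < k)
      simp [Function.comp, Real.inv_rpow hk.le, Real.rpow_neg hk.le]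
    have t2 : Tendsto (fun k : ℝ => k ^ ψ) atTop (𝓝 0) := by
      have := tendsto_rpow_neg_atTop hψ'
      simpa using this
    exact ⟨gtop.comp t1, g0.comp t2⟩
  · -- ψ > 0
    have t1 : Tendsto (fun k : ℝ => k ^ ψ) (𝓝[>] 0) (𝓝 0) := by
      have hexp : Tendsto (fun k : ℝ => Real.exp (Real.log k * ψ)) (𝓝[>] 0) (𝓝 0) :=
        Real.tendsto_exp_atBot.comp (tendsto_log_nhdsGT_zero.atBot_mul_const hpos)
      apply hexp.congr'
      filter_upwards [self_mem_nhdsWithin] with k (hk : 0 < k)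
      rw [Real.rpow_def_of_pos hk]
    have t2 : Tendsto (fun k : ℝ => k ^ ψ) atTop atTop := tendsto_rpow_atTop hpos
    exact ⟨g0.comp t1, gtop.comp t2⟩
end
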